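/- Define q : (0,1] → ℝ by q(x) := max(0, 1 + ln x). Then: (i) q(x) + (1/x)·∫_x^1 q(y) dy ≥ 1 for all x ∈ (0,1], with equality for all x ∈ [e^{−1}, 1]; (ii) q vanishes on (0, e^{−1}]; and (iii) ∫_0^1 q(x) dx = e^{−1}. -/

import Mathlib

open MeasureTheory intervalIntegral Real

private lemma int_one_add_log (a : ℝ) (ha : 0 < a) (ha1 : a ≤ 1) :
    ∫ y in a..(1:ℝ), (1 + Real.log y) = -(a * Real.log a) := by
  have huIcc : Set.uIcc a 1 = Set.Icc a 1 := Set.uIcc_of_le ha1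
  have hderiv : ∀ y ∈ Set.uIcc a 1,
      HasDerivAt (fun t => t * Real.log t) (1 + Real.log y) y := by
    intro y hy
    rw [huIcc] at hy
    have hy0 : y ≠ 0 := (lt_of_lt_of_le ha hy.1).ne'
    have := Real.hasDerivAt_mul_log hy0
    simpa [add_comm] using this
  have hint : IntervalIntegrable (fun y => 1 + Real.log y) volume a 1 := by
    apply ContinuousOn.intervalIntegrable
    rw [huIcc]
    exact continuousOn_const.add (Real.continuousOn_log.mono (fun y hy =>
      (lt_of_lt_of_le ha hy.1).ne'))
  have := intervalIntegral.integral_eq_sub_of_hasDerivAt hderiv hint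
  simpa using this

private lemma q_eq_zero' (q : ℝ → ℝ) (hq : ∀ x : ℝ, q x = max 0 (1 + Real.log x))
    (x : ℝ) (hx0 : 0 < x) (hx : x ≤ Real.exp (-1)) : q x = 0 := by
  have hlog : Real.log x ≤ -1 := by
    have := Real.log_le_log hx0 hx
    simpa [Real.log_exp] using this
  rw [hq x, max_eq_left (by linarith)]

theorem optimal_dual_CD1
    (q : ℝ → ℝ) (hq : ∀ x : ℝ, q x = max 0 (1 + Real.log x)) :
    (∀ x ∈ Set.Ioc (0 : ℝ) 1, 1 ≤ q x + (1 / x) * ∫ y in x..(1 : ℝ), q y) ∧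
    (∀ x ∈ Set.Icc (Real.exp (-1)) 1, q x + (1 / x) * (∫ y in x..(1 : ℝ), q y) = 1) ∧
    (∀ x ∈ Set.Ioc (0 : ℝ) (Real.exp (-1)), q x = 0) ∧
    (∫ x in (0 : ℝ)..1, q x) = Real.exp (-1) := by
  set c := Real.exp (-1) with hc
  have hc0 : 0 < c := Real.exp_pos _
  have hc1 : c ≤ 1 := Real.exp_le_one_iff.mpr (by norm_num)
  have hlogc : Real.log c = -1 := Real.log_exp _
  -- q = 1 + log on [c, 1]
  have hq_eq : ∀ y : ℝ, c ≤ y → q y = 1 + Real.log y := by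
    intro y hy
    have : (-1:ℝ) ≤ Real.log y := by
      have := Real.log_le_log hc0 hy
      simpa [hlogc] using this
    rw [hq y, max_eq_right (by linarith)]
  -- integral from a to 1 for a ∈ [c,1]
  have hint_q : ∀ a : ℝ, c ≤ a → a ≤ 1 →
      ∫ y in a..(1:ℝ), q y = -(a * Real.log a) := by
    intro a hca ha1
    have : ∫ y in a..(1:ℝ), q y = ∫ y in a..(1:ℝ), (1 + Real.log y) := by
      apply intervalIntegral.integral_congr
      intro y hy
      rw [Set.uIcc_of_le ha1] at hy
      exact hq_eq y (le_trans hca hy.1)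
    rw [this]
    exact int_one_add_log a (lt_of_lt_of_le hc0 hca) ha1
  -- integral from x to c is 0 for 0 ≤ x ≤ c
  have hint_zero : ∀ x : ℝ, 0 ≤ x → x ≤ c → ∫ y in x..c, q y = 0 := by
    intro x hx0 hxc
    rw [intervalIntegral.integral_of_le hxc]
    rw [MeasureTheory.setIntegral_congr_fun measurableSet_Ioc
      (g := fun _ => (0:ℝ)) (fun y hy => q_eq_zero' q hq y (lt_of_le_of_lt hx0 hy.1) hy.2)]
    simp
  -- integrability pieces
  have hint_q_c1 : ∀ a : ℝ, c ≤ a → a ≤ 1 → IntervalIntegrable q volume a 1 := by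
    intro a hca ha1
    apply ContinuousOn.intervalIntegrable
    rw [Set.uIcc_of_le ha1]
    intro y hy
    apply ContinuousWithinAt.congr (f := fun t => 1 + Real.log t)
    · exact (continuousOn_const.add (Real.continuousOn_log.mono (fun z hz =>
        (lt_of_lt_of_le (lt_of_lt_of_le hc0 hca) hz.1).ne'))) y hy
    · intro z hz; exact hq_eq z (le_trans hca hz.1)
    · exact hq_eq y (le_trans hca hy.1)
  have hint_q_xc : ∀ x : ℝ, 0 ≤ x → x ≤ c → IntervalIntegrable q volume x c := by
    intro x hx0 hxc
    rw [intervalIntegrable_iff_integrableOn_Ioc_of_le hxc]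
    exact MeasureTheory.integrableOn_zero.congr_fun
      (fun y hy => (q_eq_zero' q hq y (lt_of_le_of_lt hx0 hy.1) hy.2).symm) measurableSet_Ioc
  -- split integral for x ≤ c
  have hsplit : ∀ x : ℝ, 0 ≤ x → x ≤ c → ∫ y in x..(1:ℝ), q y = c := by
    intro x hx0 hxc
    rw [← intervalIntegral.integral_add_adjacent_intervals (hint_q_xc x hx0 hxc)
      (hint_q_c1 c le_rfl hc1), hint_zero x hx0 hxc, hint_q c le_rfl hc1, hlogc]
    ring
  refine ⟨?_, ?_, ?_, ?_⟩
  · intro x hx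
    rcases le_or_gt c x with h | h
    · have := hint_q x h hx.2
      rw [this, hq_eq x h]
      have hx0 : x ≠ 0 := (lt_of_lt_of_le hc0 h).ne'
      have h1 : 1 / x * -(x * Real.log x) = -Real.log x := by field_simp
      rw [h1]; linarith
    · rw [hsplit x hx.1.le h.le, q_eq_zero' q hq x hx.1 h.le]
      have : (1:ℝ) ≤ c / x := (one_le_div hx.1).mpr h.le
      calc (1:ℝ) ≤ c / x := this
        _ = 0 + 1 / x * c := by ring
  · intro x hx
    rw [hint_q x hx.1 hx.2, hq_eq x hx.1]
    have hx0 : x ≠ 0 := (lt_of_lt_of_le hc0 hx.1).ne'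
    have h1 : 1 / x * -(x * Real.log x) = -Real.log x := by field_simp
    rw [h1]; ring
  · intro x hx
    exact q_eq_zero' q hq x hx.1 hx.2
  · rw [← intervalIntegral.integral_add_adjacent_intervals (hint_q_xc 0 le_rfl hc0.le)
      (hint_q_c1 c le_rfl hc1), hint_zero 0 le_rfl hc0.le, hint_q c le_rfl hc1, hlogc]
    ring
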